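/- Let n ≥ 1 and let P be an n-simplex in E^n whose reflection group G_P is discrete. Then no mirror of G_P decomposing P is parallel to a facet of P. Precisely: there is no affine hyperplane H in E^n such that the reflection in H belongs to G_P, H has the same direction as (i.e., is parallel to) one of the facet hyperplanes of P, and H meets the interior of P (the interior of the convex hull of the vertices of P). -/

import Mathlib

open scoped RealInnerProductSpace

noncomputable section

/-- Euclidean `n`-space. -/
abbrev Euc (n : ℕ) : Type := EuclideanSpace ℝ (Fin n)

/-- The `i`-th facet hyperplane of the simplex with vertices `p 0, …, p n`:
the affine span of the vertices other than `p i`. -/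
def facetHyperplane {n : ℕ} (p : Fin (n + 1) → Euc n) (i : Fin (n + 1)) :
    AffineSubspace ℝ (Euc n) :=
  affineSpan ℝ (p '' {j | j ≠ i})

/-- `g` is the reflection of Euclidean `n`-space in the affine subspace `H`:
an isometry different from the identity which fixes `H` pointwise.  (When `H` is an
affine hyperplane this characterizes the reflection in `H`.) -/
def IsReflectionIn {n : ℕ} (g : Euc n ≃ᵢ Euc n) (H : AffineSubspace ℝ (Euc n)) : Prop :=
  (∀ x ∈ H, g x = x) ∧ g ≠ IsometryEquiv.refl (Euc n)

/-- The reflection group of the simplex with vertices `p 0, …, p n`: the subgroup of the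
isometry group of Euclidean `n`-space generated by the reflections in the `n + 1`
facet hyperplanes. -/
def reflGroup {n : ℕ} (p : Fin (n + 1) → Euc n) : Subgroup (Euc n ≃ᵢ Euc n) :=
  Subgroup.closure {g | ∃ i : Fin (n + 1), IsReflectionIn g (facetHyperplane p i)}

/-- A subgroup of the isometry group of Euclidean `n`-space acts properly discontinuously
(is discrete) if for all compact `K`, `L` only finitely many of its elements move `K`
so that it meets `L`. -/
def ProperlyDiscont {n : ℕ} (G : Subgroup (Euc n ≃ᵢ Euc n)) : Prop :=
  ∀ K L : Set (Euc n), IsCompact K → IsCompact L →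
    {g : Euc n ≃ᵢ Euc n | g ∈ G ∧ (g '' K ∩ L).Nonempty}.Finite

/-- `u` is an outward unit normal to the `i`-th facet of the simplex `p`. -/
def IsOutwardNormal {n : ℕ} (p : Fin (n + 1) → Euc n) (i : Fin (n + 1)) (u : Euc n) : Prop :=
  ‖u‖ = 1 ∧ (∀ v ∈ (facetHyperplane p i).direction, ⟪u, v⟫ = 0) ∧
    ∀ q ∈ facetHyperplane p i, ⟪u, p i - q⟫ < 0

namespace NoMirrorAux

variable {n : ℕ}

/-- Translation by `v` as an isometry equivalence. -/
def tr (v : Euc n) : Euc n ≃ᵢ Euc n :=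
  ⟨Equiv.addRight v, Isometry.of_dist_eq fun x y => by
    simp [Equiv.coe_addRight, dist_eq_norm]⟩

@[simp] lemma tr_apply (v x : Euc n) : tr v x = x + v := rfl

lemma tr_zero : (tr (0 : Euc n)) = 1 := by
  ext x; simp

lemma tr_add (v w : Euc n) : tr (v + w) = tr v * tr w := by
  refine IsometryEquiv.ext fun x => ?_
  show x + (v + w) = (x + w) + v
  abel

lemma tr_neg (v : Euc n) : tr (-v) = (tr v)⁻¹ := by
  refine eq_inv_of_mul_eq_one_right ?_
  rw [← tr_add]
  simp [tr_zero]

lemma tr_injective : Function.Injective (tr (n := n)) := by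
  intro v w h
  have := congrArg (fun e : Euc n ≃ᵢ Euc n => e 0) h
  simpa using this

/-- The linear part of an isometry of Euclidean space. -/
def linE (g : Euc n ≃ᵢ Euc n) : Euc n ≃ₗᵢ[ℝ] Euc n :=
  g.toRealLinearIsometryEquiv

lemma linE_apply (g : Euc n ≃ᵢ Euc n) (x : Euc n) : linE g x = g x - g 0 :=
  g.toRealLinearIsometryEquiv_apply x

lemma isom_sub (g : Euc n ≃ᵢ Euc n) (x y : Euc n) : g x - g y = linE g (x - y) := by
  rw [map_sub, linE_apply, linE_apply]
  abel

lemma isom_add (g : Euc n ≃ᵢ Euc n) (x v : Euc n) : g (x + v) = g x + linE g v := by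
  have h := isom_sub g (x + v) x
  rw [add_sub_cancel_left] at h
  exact sub_eq_iff_eq_add'.mp h

lemma linE_one (x : Euc n) : linE (1 : Euc n ≃ᵢ Euc n) x = x := by
  rw [linE_apply]
  show x - (0 : Euc n) = x
  simp

lemma linE_mul (g h : Euc n ≃ᵢ Euc n) (v : Euc n) :
    linE (g * h) v = linE g (linE h v) := by
  rw [linE_apply]
  show g (h v) - g (h 0) = _
  rw [isom_sub g (h v) (h 0), linE_apply h v]

lemma tr_conj (g : Euc n ≃ᵢ Euc n) (v : Euc n) :
    g * tr v * g⁻¹ = tr (linE g v) := by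
  refine IsometryEquiv.ext fun x => ?_
  show g (tr v (g⁻¹ x)) = x + linE g v
  rw [tr_apply, isom_add, IsometryEquiv.apply_inv_self]

/-- Construction of the reflection in the hyperplane through `c` with unit normal `u`. -/
lemma exists_reflIso (u : Euc n) (hu1 : ⟪u, u⟫ = 1) (c : Euc n) :
    ∃ σ : Euc n ≃ᵢ Euc n, ∀ y, σ y = y - (2 * ⟪u, y - c⟫) • u := by
  set f : Euc n → Euc n := fun y => y - (2 * ⟪u, y - c⟫) • u with hf
  have hinv : Function.Involutive f := by
    intro y
    show (y - (2 * ⟪u, y - c⟫) • u) - (2 * ⟪u, (y - (2 * ⟪u, y - c⟫) • u) - c⟫) • u = y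
    have e1 : ⟪u, (y - (2 * ⟪u, y - c⟫) • u) - c⟫ = -⟪u, y - c⟫ := by
      rw [sub_right_comm, inner_sub_right, real_inner_smul_right, hu1]
      ring
    rw [e1]
    have : (2 * -⟪u, y - c⟫) = -(2 * ⟪u, y - c⟫) := by ring
    rw [this, neg_smul]
    abel
  have hiso : Isometry f := by
    refine Isometry.of_dist_eq fun x y => ?_
    have hxy : f x - f y = (x - y) - (2 * ⟪u, x - y⟫) • u := by
      show (x - (2 * ⟪u, x - c⟫) • u) - (y - (2 * ⟪u, y - c⟫) • u) = _
      have : (2 * ⟪u, x - c⟫) • u - (2 * ⟪u, y - c⟫) • u = (2 * ⟪u, x - y⟫) • u := by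
        rw [← sub_smul]
        congr 1
        rw [inner_sub_right, inner_sub_right, inner_sub_right]
        ring
      rw [← this]
      abel
    rw [dist_eq_norm, dist_eq_norm, hxy]
    have h2 : ‖(x - y) - (2 * ⟪u, x - y⟫) • u‖ ^ 2 = ‖x - y‖ ^ 2 := by
      rw [← real_inner_self_eq_norm_sq, ← real_inner_self_eq_norm_sq]
      rw [inner_sub_sub_self]
      rw [real_inner_smul_right, real_inner_smul_left, real_inner_smul_left,
        real_inner_smul_right, hu1, real_inner_comm ((x : Euc n) - y) u]
      ring
    have := congrArg Real.sqrt h2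
    rwa [Real.sqrt_sq (norm_nonneg _), Real.sqrt_sq (norm_nonneg _)] at this
  exact ⟨⟨hinv.toPerm f, hiso⟩, fun y => rfl⟩

/-- Classification: an isometry fixing the affine hyperplane through `z` with direction `W`
(`u` a unit normal of `W`), other than the identity, is the reflection in it. -/
lemma refl_formula {W : Submodule ℝ (Euc n)} {u : Euc n} (hu1 : ⟪u, u⟫ = 1)
    (huW : ∀ w ∈ W, ⟪u, w⟫ = 0) (hW' : ∀ v, ⟪u, v⟫ = 0 → v ∈ W)
    (g : Euc n ≃ᵢ Euc n) (z : Euc n) (hfix : ∀ w ∈ W, g (z + w) = z + w)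
    (hne : g ≠ IsometryEquiv.refl (Euc n)) :
    ∀ y, g y = y - (2 * ⟪u, y - z⟫) • u := by
  have hgz : g z = z := by simpa using hfix 0 (zero_mem W)
  have hLW : ∀ w ∈ W, linE g w = w := by
    intro w hw
    have h1 := isom_sub g (z + w) z
    rw [hfix w hw, hgz, add_sub_cancel_left] at h1
    exact h1.symm
  have hinner : ∀ v w : Euc n, ⟪linE g v, linE g w⟫ = ⟪v, w⟫ := fun v w =>
    (linE g).inner_map_map v w
  set α := ⟪u, linE g u⟫ with hα_def
  have hLu : linE g u = α • u := by
    have hperp : ∀ w ∈ W, ⟪linE g u, w⟫ = 0 := by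
      intro w hw
      conv_lhs => rw [← hLW w hw]
      rw [hinner]
      exact huW w hw
    set v' := linE g u - α • u with hv'def
    have hv'perp : ⟪u, v'⟫ = 0 := by
      rw [hv'def, inner_sub_right, real_inner_smul_right, hu1, hα_def]
      ring
    have hv'W : v' ∈ W := hW' _ hv'perp
    have hzero : ⟪v', v'⟫ = 0 := by
      have h1 : ⟪linE g u, v'⟫ = 0 := hperp v' hv'W
      have h2 : ⟪α • u, v'⟫ = 0 := by
        rw [real_inner_smul_left, hv'perp]
        ring
      calc ⟪v', v'⟫ = ⟪linE g u, v'⟫ - ⟪α • u, v'⟫ := by rw [← inner_sub_left]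
        _ = 0 := by rw [h1, h2, sub_zero]
    have : v' = 0 := by rwa [inner_self_eq_zero] at hzero
    have := sub_eq_zero.mp this
    exact this
  have hαα : α * α = 1 := by
    have h1 := hinner u u
    rw [hLu, real_inner_smul_left, real_inner_smul_right, hu1] at h1
    rw [mul_one] at h1
    exact h1
  have hdecomp : ∀ v : Euc n, linE g v = v - ((1 - α) * ⟪u, v⟫) • u := by
    intro v
    have hvW : v - ⟪u, v⟫ • u ∈ W := by
      refine hW' _ ?_
      rw [inner_sub_right, real_inner_smul_right, hu1]
      ring
    have hfixv : linE g (v - ⟪u, v⟫ • u) = v - ⟪u, v⟫ • u := hLW _ hvW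
    have expand : v = (v - ⟪u, v⟫ • u) + ⟪u, v⟫ • u := by abel
    calc linE g v = linE g ((v - ⟪u, v⟫ • u) + ⟪u, v⟫ • u) := by rw [← expand]
      _ = linE g (v - ⟪u, v⟫ • u) + ⟪u, v⟫ • linE g u := by rw [map_add, map_smul]
      _ = (v - ⟪u, v⟫ • u) + ⟪u, v⟫ • (α • u) := by rw [hfixv, hLu]
      _ = v - ((1 - α) * ⟪u, v⟫) • u := by
          module
  rcases mul_self_eq_one_iff.mp hαα with h1 | hm1
  · exfalso
    apply hne
    refine IsometryEquiv.ext fun y => ?_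
    have hg0 : g 0 = 0 := by
      have hz1 := linE_apply g z
      have hz2 : linE g z = z := by rw [hdecomp, h1]; simp
      rw [hz2, hgz] at hz1
      exact sub_eq_self.mp hz1.symm
    have hy2 : linE g y = y := by rw [hdecomp, h1]; simp
    have hgy := linE_apply g y
    rw [hy2, hg0, sub_zero] at hgy
    exact hgy.symm
  · intro y
    have hy : linE g y = y - (2 * ⟪u, y⟫) • u := by
      rw [hdecomp, hm1]
      norm_num
    have hg0 : g 0 = (2 * ⟪u, z⟫) • u := by
      have hz1 := linE_apply g z
      have hz2 : linE g z = z - (2 * ⟪u, z⟫) • u := by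
        rw [hdecomp, hm1]
        norm_num
      rw [hz2, hgz] at hz1
      exact (sub_right_inj.mp hz1).symm
    have hgy := linE_apply g y
    rw [hy, hg0] at hgy
    have hsplit : g y = y - (2 * ⟪u, y⟫) • u + (2 * ⟪u, z⟫) • u :=
      sub_eq_iff_eq_add.mp hgy.symm
    rw [hsplit, inner_sub_right]
    module

end NoMirrorAux

set_option maxHeartbeats 1000000 in
open NoMirrorAux in
/-- If the reflection group of a Euclidean `n`-simplex is discrete, then no
mirror of the group which decomposes the simplex (i.e. meets its interior) is parallel to
a facet of the simplex. -/
theorem no_mirror_parallel_to_facet {n : ℕ} (hn : 1 ≤ n) (p : Fin (n + 1) → Euc n)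
    (hp : AffineIndependent ℝ p) (hdisc : ProperlyDiscont (reflGroup p)) :
    ¬ ∃ H : AffineSubspace ℝ (Euc n),
        (∃ g ∈ reflGroup p, IsReflectionIn g H) ∧
        (∃ i : Fin (n + 1), H.direction = (facetHyperplane p i).direction) ∧
        ((H : Set (Euc n)) ∩ interior (convexHull ℝ (Set.range p))).Nonempty := by
  rintro ⟨H, ⟨ρ, hρG, hρfix, hρne⟩, ⟨i, hdir⟩, x₀, hx₀H, hx₀int⟩
  obtain ⟨j₀, hj₀⟩ : ∃ j₀ : Fin (n + 1), j₀ ≠ i :=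
    Fintype.exists_ne_of_one_lt_card (by simp; omega) i
  set F := facetHyperplane p i with hF
  set W := F.direction with hWdef
  have hqF : p j₀ ∈ F := subset_affineSpan ℝ _ ⟨j₀, hj₀, rfl⟩
  have hpiF : p i ∉ F := by
    have h0 := hp.notMem_affineSpan_diff i Set.univ
    have he : (Set.univ \ {i} : Set (Fin (n + 1))) = {j | j ≠ i} := by
      ext j; simp [Set.mem_diff]
    rw [he] at h0
    exact h0
  -- the unit outward normal `u` and the height `h`
  obtain ⟨z, hzdef⟩ : ∃ z : Euc n, z = p i - p j₀ := ⟨_, rfl⟩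
  obtain ⟨e, hedef⟩ : ∃ e : Euc n, e = z - (W.orthogonalProjectionOnto z : Euc n) := ⟨_, rfl⟩
  have he_mem : e ∈ Wᗮ := by
    rw [hedef]; exact Submodule.sub_starProjection_mem_orthogonal z
  have he0 : e ≠ 0 := by
    intro h0
    rw [hedef] at h0
    apply hpiF
    have hzW : z ∈ W := by
      have h1 : z = (W.orthogonalProjectionOnto z : Euc n) := by
        have := sub_eq_zero.mp h0; exact this
      rw [h1]; exact (W.orthogonalProjectionOnto z).2
    have h2 := AffineSubspace.vadd_mem_of_mem_direction hzW hqF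
    have hz' : z +ᵥ p j₀ = p i := by
      show z + p j₀ = p i
      rw [hzdef]; abel
    rwa [hz'] at h2
  obtain ⟨u, hudef⟩ : ∃ u : Euc n, u = ‖e‖⁻¹ • e := ⟨_, rfl⟩
  have hu_norm : ‖u‖ = 1 := by
    rw [hudef, norm_smul, norm_inv, norm_norm, inv_mul_cancel₀ (norm_ne_zero_iff.mpr he0)]
  have hu0 : u ≠ 0 := by intro h; rw [h] at hu_norm; simp at hu_norm
  have hu1 : ⟪u, u⟫ = 1 := by rw [real_inner_self_eq_norm_sq, hu_norm]; norm_num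
  have huWperp : u ∈ Wᗮ := by rw [hudef]; exact Submodule.smul_mem _ _ he_mem
  have huW : ∀ w ∈ W, ⟪u, w⟫ = 0 := (Submodule.mem_orthogonal' W u).mp huWperp
  obtain ⟨h, hhdef⟩ : ∃ h : ℝ, h = ⟪u, z⟫ := ⟨_, rfl⟩
  have hh : 0 < h := by
    have h1 : ⟪u, (W.orthogonalProjectionOnto z : Euc n)⟫ = 0 :=
      huW _ (W.orthogonalProjectionOnto z).2
    have h2 : h = ⟪u, e⟫ + ⟪u, (W.orthogonalProjectionOnto z : Euc n)⟫ := by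
      rw [hhdef, ← inner_add_right]
      congr 1
      rw [hedef]; abel
    have h3 : ⟪u, e⟫ = ‖e‖⁻¹ * (‖e‖ ^ 2) := by
      rw [hudef, real_inner_smul_left, real_inner_self_eq_norm_sq]
    have he_pos : 0 < ‖e‖ := norm_pos_iff.mpr he0
    have h4 : ‖e‖⁻¹ * ‖e‖ ^ 2 = ‖e‖ := by field_simp
    rw [h2, h1, add_zero, h3, h4]
    exact he_pos
  -- `u` spans the orthogonal complement of `W`
  have hW' : ∀ v : Euc n, ⟪u, v⟫ = 0 → v ∈ W := by
    have hcard : Fintype.card {j : Fin (n + 1) // j ≠ i} = n := by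
      have h1 : Fintype.card {j : Fin (n + 1) // j = i} = 1 := Fintype.card_subtype_eq i
      have h2 := Fintype.card_subtype_compl (p := fun j : Fin (n + 1) => j = i)
      rw [h1, Fintype.card_fin] at h2
      simpa using h2
    have haff : AffineIndependent ℝ (fun j : {j : Fin (n + 1) // j ≠ i} => p j) :=
      hp.subtype _
    have hWrank : Module.finrank ℝ W = n - 1 := by
      rw [hWdef, hF]
      show Module.finrank ℝ (affineSpan ℝ (p '' {j | j ≠ i})).direction = n - 1
      rw [direction_affineSpan, Set.image_eq_range]
      exact haff.finrank_vectorSpan (by rw [hcard]; omega)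
    have horth_rank : Module.finrank ℝ (Wᗮ) = 1 := by
      have htot := Submodule.finrank_add_finrank_orthogonal (K := W)
      rw [hWrank, finrank_euclideanSpace_fin] at htot
      omega
    have hspan : (Submodule.span ℝ {u}) = Wᗮ := by
      apply Submodule.eq_of_le_of_finrank_le
      · rw [Submodule.span_le]; simpa using huWperp
      · rw [horth_rank, finrank_span_singleton hu0]
    intro v hv
    rw [← Submodule.orthogonal_orthogonal W, Submodule.mem_orthogonal]
    intro x hx
    rw [← hspan] at hx
    obtain ⟨c, rfl⟩ := Submodule.mem_span_singleton.mp hx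
    rw [real_inner_smul_left, hv, mul_zero]
  -- inner products with the vertices
  have hvert : ∀ j, j ≠ i → ⟪u, p j - p i⟫ = -h := by
    intro j hj
    have hjF : p j ∈ F := subset_affineSpan ℝ _ ⟨j, hj, rfl⟩
    have hdiff : p j - p j₀ ∈ W := by
      have := AffineSubspace.vsub_mem_direction hjF hqF
      simpa [vsub_eq_sub] using this
    have h1 : ⟪u, p j - p j₀⟫ = 0 := huW _ hdiff
    have h2 : p j - p i = (p j - p j₀) - z := by rw [hzdef]; abel
    rw [h2, inner_sub_right, h1, hhdef]; ring
  -- position of the interior point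
  have hlin : IsLinearMap ℝ (fun y : Euc n => ⟪u, y⟫) :=
    ⟨fun x y => inner_add_right u x y, fun c x => real_inner_smul_right u x c⟩
  have hsub1 : convexHull ℝ (Set.range p) ⊆ {y : Euc n | ⟪u, y⟫ ≤ ⟪u, p i⟫} := by
    apply convexHull_min _ (convex_halfSpace_le hlin _)
    rintro x ⟨j, rfl⟩
    by_cases hj : j = i
    · subst hj
      simp only [Set.mem_setOf_eq]
      exact le_refl _
    · have h1 := hvert j hj
      rw [inner_sub_right] at h1
      simp only [Set.mem_setOf_eq]
      linarith
  have hsub2 : convexHull ℝ (Set.range p) ⊆ {y : Euc n | ⟪u, p i⟫ - h ≤ ⟪u, y⟫} := by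
    apply convexHull_min _ (convex_halfSpace_ge hlin _)
    rintro x ⟨j, rfl⟩
    by_cases hj : j = i
    · subst hj
      simp only [Set.mem_setOf_eq]
      linarith
    · have h1 := hvert j hj
      rw [inner_sub_right] at h1
      simp only [Set.mem_setOf_eq]
      linarith
  obtain ⟨ε, hε, hball⟩ := Metric.isOpen_iff.mp isOpen_interior x₀ hx₀int
  obtain ⟨a, hadef⟩ : ∃ a : ℝ, a = ⟪u, p i - x₀⟫ := ⟨_, rfl⟩
  have hx₀hull : ∀ y ∈ Metric.ball x₀ ε, y ∈ convexHull ℝ (Set.range p) :=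
    fun y hy => interior_subset (hball hy)
  have hmem1 : x₀ + (ε / 2) • u ∈ convexHull ℝ (Set.range p) := by
    apply hx₀hull
    rw [Metric.mem_ball, dist_eq_norm, add_sub_cancel_left, norm_smul, hu_norm, mul_one,
      Real.norm_eq_abs, abs_of_pos (by linarith : (0:ℝ) < ε / 2)]
    linarith
  have hmem2 : x₀ - (ε / 2) • u ∈ convexHull ℝ (Set.range p) := by
    apply hx₀hull
    rw [Metric.mem_ball, dist_eq_norm]
    have h1 : x₀ - (ε / 2) • u - x₀ = -((ε / 2) • u) := by abel
    rw [h1, norm_neg, norm_smul, hu_norm, mul_one,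
      Real.norm_eq_abs, abs_of_pos (by linarith : (0:ℝ) < ε / 2)]
    linarith
  have ha_pos : 0 < a := by
    have h1 := hsub1 hmem1
    simp only [Set.mem_setOf_eq] at h1
    rw [inner_add_right, real_inner_smul_right, hu1] at h1
    rw [hadef, inner_sub_right]
    linarith
  have ha_lt : a < h := by
    have h1 := hsub2 hmem2
    simp only [Set.mem_setOf_eq] at h1
    rw [inner_sub_right, real_inner_smul_right, hu1] at h1
    rw [hadef, inner_sub_right]
    linarith
  -- the reflection in the facet hyperplane
  obtain ⟨σ, hσ⟩ := exists_reflIso u hu1 (p j₀)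
  have hσG : σ ∈ reflGroup p := by
    apply Subgroup.subset_closure
    refine ⟨i, fun x hx => ?_, ?_⟩
    · rw [hσ]
      have hxW : x - p j₀ ∈ W := by
        have := AffineSubspace.vsub_mem_direction hx hqF
        simpa [vsub_eq_sub] using this
      rw [huW _ hxW]
      simp
    · intro heq
      have h1 : σ (p i) = p i := by rw [heq]; rfl
      rw [hσ] at h1
      have h2 : (2 * ⟪u, p i - p j₀⟫) • u = 0 := sub_eq_self.mp h1
      rw [← hzdef, ← hhdef] at h2
      rcases smul_eq_zero.mp h2 with hc | hc
      · have : h ≠ 0 := ne_of_gt hh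
        apply this; linarith
      · exact hu0 hc
  -- the formula for the hypothesized reflection ρ
  have hρfix' : ∀ w ∈ W, ρ (x₀ + w) = x₀ + w := by
    intro w hw
    have hwH : w ∈ H.direction := by rw [hdir]; exact hw
    have h1 := AffineSubspace.vadd_mem_of_mem_direction hwH hx₀H
    have h2 : w +ᵥ x₀ = x₀ + w := by show w + x₀ = x₀ + w; abel
    rw [h2] at h1
    exact hρfix _ h1
  have hρy := refl_formula hu1 huW hW' ρ x₀ hρfix' hρne
  -- the additive subgroup generated by the orbit of u under all linear parts
  set Sgen : Set (Euc n) := {v | ∃ g ∈ reflGroup p, v = linE g u} with hSgen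
  set N : AddSubgroup (Euc n) := AddSubgroup.closure Sgen with hNdef
  have hInv : ∀ g ∈ reflGroup p, ∀ v ∈ N, linE g v ∈ N := by
    intro g hg v hv
    refine AddSubgroup.closure_induction ?_ ?_ ?_ ?_ hv
    · rintro x ⟨g', hg', rfl⟩
      exact AddSubgroup.subset_closure ⟨g * g', mul_mem hg hg', (linE_mul g g' u).symm⟩
    · rw [map_zero]; exact zero_mem N
    · intro x y hx hy hx' hy'
      rw [map_add]; exact add_mem hx' hy'
    · intro x hx hx'
      rw [map_neg]; exact neg_mem hx'
  have huN : u ∈ N := AddSubgroup.subset_closure ⟨1, one_mem _, (linE_one u).symm⟩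
  -- the key displacement estimate
  have hMain : ∀ g ∈ reflGroup p, ∃ ν ∈ N, g (p i) - p i = (2 * h) • ν := by
    intro g hg
    have hg' : g ∈ Subgroup.closure {g | ∃ k : Fin (n + 1),
        IsReflectionIn g (facetHyperplane p k)} := hg
    refine Subgroup.closure_induction ?_ ?_ ?_ ?_ hg'
    · rintro x ⟨k, hkfix, hkne⟩
      by_cases hk : k = i
      · rw [hk] at hkfix
        have hfixW : ∀ w ∈ W, x (p j₀ + w) = p j₀ + w := by
          intro w hw
          have h1 := AffineSubspace.vadd_mem_of_mem_direction hw hqF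
          have h2 : w +ᵥ p j₀ = p j₀ + w := by show w + p j₀ = p j₀ + w; abel
          rw [h2] at h1
          exact hkfix _ h1
        have hx := refl_formula hu1 huW hW' x (p j₀) hfixW hkne
        refine ⟨-u, neg_mem huN, ?_⟩
        rw [hx (p i), ← hzdef, ← hhdef, smul_neg]
        abel
      · have hpik : p i ∈ facetHyperplane p k :=
          subset_affineSpan ℝ _ ⟨i, Ne.symm hk, rfl⟩
        refine ⟨0, zero_mem N, ?_⟩
        rw [hkfix _ hpik]
        simp
    · exact ⟨0, zero_mem N, by simp⟩
    · rintro g₁ g₂ hg₁ hg₂ ⟨ν₁, hν₁, e₁⟩ ⟨ν₂, hν₂, e₂⟩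
      refine ⟨linE g₁ ν₂ + ν₁, add_mem (hInv g₁ hg₁ ν₂ hν₂) hν₁, ?_⟩
      have hsplit : (g₁ * g₂) (p i) - p i
          = (g₁ (g₂ (p i)) - g₁ (p i)) + (g₁ (p i) - p i) := by
        rw [IsometryEquiv.mul_apply]
        abel
      rw [hsplit, isom_sub g₁, e₂, e₁, map_smul, smul_add]
    · rintro g₁ hg₁ ⟨ν, hν, e₁⟩
      refine ⟨-(linE g₁⁻¹ ν), neg_mem (hInv g₁⁻¹ (inv_mem hg₁) ν hν), ?_⟩
      have h1 : g₁⁻¹ (g₁ (p i)) - g₁⁻¹ (p i) = linE g₁⁻¹ (g₁ (p i) - p i) := isom_sub g₁⁻¹ _ _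
      rw [IsometryEquiv.inv_apply_self, e₁, map_smul] at h1
      rw [smul_neg, ← h1]
      abel
  -- apply it to ρ
  obtain ⟨ν₀, hν₀N, hν₀⟩ := hMain ρ hρG
  have hδρ : ρ (p i) - p i = (-(2 * a)) • u := by
    rw [hρy (p i), ← hadef, neg_smul]
    abel
  have hν₀u : (a / h) • u = -ν₀ := by
    have h2h : (2 * h) ≠ 0 := ne_of_gt (by linarith : (0:ℝ) < 2 * h)
    have h1 : (2 * h) • ν₀ = (-(2 * a)) • u := by rw [← hν₀]; exact hδρ
    have h2 : ν₀ = ((2 * h)⁻¹ * (-(2 * a))) • u := by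
      rw [mul_smul, ← h1, smul_smul, inv_mul_cancel₀ h2h, one_smul]
    rw [h2, ← neg_smul]
    congr 1
    field_simp
  have hsuN0 : (a / h) • u ∈ N := by rw [hν₀u]; exact neg_mem hν₀N
  obtain ⟨s, hsdef⟩ : ∃ s : ℝ, s = a / h := ⟨_, rfl⟩
  have hsuN : s • u ∈ N := by rw [hsdef]; exact hsuN0
  have hs0 : 0 < s := by rw [hsdef]; exact div_pos ha_pos hh
  have hs1 : s < 1 := by rw [hsdef]; exact (div_lt_one hh).mpr ha_lt
  have hscale : ∀ v ∈ N, s • v ∈ N := by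
    intro v hv
    refine AddSubgroup.closure_induction ?_ ?_ ?_ ?_ hv
    · rintro x ⟨g, hg, rfl⟩
      rw [← map_smul]
      exact hInv g hg _ hsuN
    · rw [smul_zero]; exact zero_mem N
    · intro x y hx hy hx' hy'
      rw [smul_add]; exact add_mem hx' hy'
    · intro x hx hx'
      rw [smul_neg]; exact neg_mem hx'
  have hpow : ∀ k : ℕ, (s ^ k) • u ∈ N := by
    intro k
    induction k with
    | zero => simpa using huN
    | succ m ih =>
        have h1 : (s ^ (m + 1)) • u = s • ((s ^ m) • u) := by
          rw [smul_smul, pow_succ']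
        rw [h1]
        exact hscale _ ih
  -- the translation σ ∘ ρ
  have hτ : σ * ρ = tr ((2 * (a - h)) • u) := by
    refine IsometryEquiv.ext fun y => ?_
    show σ (ρ y) = y + (2 * (a - h)) • u
    rw [hρy y, hσ]
    have e2 : ⟪u, (y - (2 * ⟪u, y - x₀⟫) • u) - p j₀⟫
        = ⟪u, y⟫ - 2 * (⟪u, y⟫ - ⟪u, x₀⟫) - ⟪u, p j₀⟫ := by
      rw [inner_sub_right, inner_sub_right, real_inner_smul_right, hu1, inner_sub_right]
      ring
    have e3 : ⟪u, y - x₀⟫ = ⟪u, y⟫ - ⟪u, x₀⟫ := inner_sub_right _ _ _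
    have e4 : 2 * (a - h) = 2 * (⟪u, p j₀⟫ - ⟪u, x₀⟫) := by
      rw [hadef, hhdef, hzdef, inner_sub_right, inner_sub_right]
      ring
    rw [e2, e3, e4]
    module
  have hw0G : tr ((2 * (a - h)) • u) ∈ reflGroup p := by
    rw [← hτ]; exact mul_mem hσG hρG
  have hconj : ∀ g ∈ reflGroup p, ∀ v : Euc n, tr v ∈ reflGroup p →
      tr (linE g v) ∈ reflGroup p := by
    intro g hg v hv
    rw [← tr_conj]
    exact mul_mem (mul_mem hg hv) (inv_mem hg)
  have hTrN : ∀ v ∈ N, tr ((2 * (a - h)) • v) ∈ reflGroup p := by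
    intro v hv
    refine AddSubgroup.closure_induction ?_ ?_ ?_ ?_ hv
    · rintro x ⟨g, hg, rfl⟩
      rw [← map_smul]
      exact hconj g hg _ hw0G
    · rw [smul_zero, tr_zero]; exact one_mem _
    · intro x y hx hy hx' hy'
      rw [smul_add, tr_add]; exact mul_mem hx' hy'
    · intro x hx hx'
      rw [smul_neg, tr_neg]; exact inv_mem hx'
  -- infinitely many bounded elements: contradiction with discreteness
  have hane : 2 * (a - h) ≠ 0 := by
    intro hc
    have : a = h := by linarith
    exact absurd this (ne_of_lt ha_lt)
  set f : ℕ → (Euc n ≃ᵢ Euc n) := fun k => tr ((2 * (a - h)) • ((s ^ k) • u)) with hfdef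
  have hinj : Function.Injective f := by
    intro k l hkl
    have h1 := tr_injective hkl
    rw [smul_smul, smul_smul] at h1
    have h2 : (2 * (a - h)) * s ^ k = (2 * (a - h)) * s ^ l :=
      smul_left_injective ℝ hu0 h1
    have h3 : (s : ℝ) ^ k = s ^ l := mul_left_cancel₀ hane h2
    have hmono : StrictAnti fun m : ℕ => s ^ m := fun k l hkl =>
      pow_lt_pow_right_of_lt_one₀ hs0 hs1 hkl
    exact hmono.injective h3
  have hmem : ∀ k : ℕ, f k ∈ {g : Euc n ≃ᵢ Euc n |
      g ∈ reflGroup p ∧ (g '' {0} ∩ Metric.closedBall 0 (2 * h)).Nonempty} := by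
    intro k
    have hv0 : f k 0 = (2 * (a - h)) • ((s ^ k) • u) := by
      simp only [hfdef, tr_apply, zero_add]
    refine ⟨hTrN _ (hpow k), ⟨f k 0, ⟨0, rfl, rfl⟩, ?_⟩⟩
    have hsk1 : s ^ k ≤ 1 := pow_le_one₀ hs0.le hs1.le
    have hsk0 : 0 ≤ s ^ k := pow_nonneg hs0.le k
    rw [hv0, Metric.mem_closedBall, dist_zero_right, norm_smul, norm_smul, hu_norm, mul_one,
      Real.norm_eq_abs, Real.norm_eq_abs, abs_of_nonneg hsk0]
    have habs : |2 * (a - h)| = 2 * (h - a) := by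
      rw [abs_of_neg (by linarith : 2 * (a - h) < 0)]; ring
    rw [habs]
    calc 2 * (h - a) * s ^ k ≤ 2 * (h - a) * 1 :=
          mul_le_mul_of_nonneg_left hsk1 (by linarith)
      _ ≤ 2 * h := by linarith
  have hfin := hdisc {0} (Metric.closedBall 0 (2 * h)) isCompact_singleton
    (isCompact_closedBall _ _)
  exact (Set.infinite_of_injective_forall_mem hinj hmem) hfin
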